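/- The graph G_q(f_2(x)y, …, f_{m+1}(x)y) is connected if and only if the functions 1, f_2, …, f_{m+1} : F_q → F_q are linearly independent over F_q; more precisely, the number of connected components equals q^{m+1−r}, where r is the F_q-rank of the span of the functions 1, f_2, …, f_{m+1}. -/

import Mathlib

/-- Point `P` is adjacent to line `L` iff `l_k + p_k = f_k(p_1) l_1` for `2 ≤ k ≤ m+1`. -/
def wengerAdj {F : Type} [Field F] {m : ℕ} (f : Fin m → Polynomial F)
    (P L : Fin (m + 1) → F) : Prop :=
  ∀ k : Fin m, L k.succ + P k.succ = (f k).eval (P 0) * L 0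

/-- The bipartite graph `G_q(f_2(x)y, …, f_{m+1}(x)y)` on points ⊕ lines. -/
def wengerGraph (F : Type) [Field F] {m : ℕ} (f : Fin m → Polynomial F) :
    SimpleGraph ((Fin (m + 1) → F) ⊕ (Fin (m + 1) → F)) :=
  SimpleGraph.fromRel fun v w => match v, w with
    | Sum.inl P, Sum.inr L => wengerAdj f P L
    | _, _ => False

namespace WengerAux

open SimpleGraph Submodule

variable {F : Type} [Field F] {m : ℕ} (f : Fin m → Polynomial F)

/-- the row vector `(1, f₂(u), …, f_{m+1}(u))` -/
def vv (u : F) : Fin (m + 1) → F := Fin.cons 1 fun k => (f k).eval u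

/-- the first standard basis vector -/
def e1 (F : Type) [Field F] (m : ℕ) : Fin (m + 1) → F := Fin.cons 1 0

@[simp] lemma vv_zero (u : F) : vv f u 0 = 1 := rfl
@[simp] lemma vv_succ (u : F) (k : Fin m) : vv f u k.succ = (f k).eval u := rfl
@[simp] lemma e1_zero : e1 F m 0 = 1 := rfl
@[simp] lemma e1_succ (k : Fin m) : e1 F m k.succ = 0 := rfl

/-- the subspace controlling connected components -/
def SS : Submodule F (Fin (m + 1) → F) :=
  Submodule.span F (insert (e1 F m) (Set.range fun u => vv f u - vv f 0))

lemma adj_iff (P L : Fin (m + 1) → F) :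
    (wengerGraph F f).Adj (Sum.inl P) (Sum.inr L) ↔ wengerAdj f P L := by
  rw [wengerGraph, SimpleGraph.fromRel_adj]
  constructor
  · rintro ⟨-, h | h⟩
    · exact h
    · exact h.elim
  · intro h
    exact ⟨by simp, Or.inl h⟩

lemma reach_move' (P : Fin (m + 1) → F) (u l : F) (Q : Fin (m + 1) → F)
    (hQ : Q = P + l • (vv f u - vv f (P 0)) + (u - P 0) • e1 F m) :
    (wengerGraph F f).Reachable (Sum.inl P) (Sum.inl Q) := by
  set L : Fin (m + 1) → F := l • vv f (P 0) + (P 0) • e1 F m - P with hL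
  have hL0 : L 0 = l := by simp [hL]
  have h1 : (wengerGraph F f).Adj (Sum.inl P) (Sum.inr L) := by
    rw [adj_iff]
    intro k
    simp [hL]
    ring
  have hQ' : Q = L 0 • vv f u + u • e1 F m - L := by
    rw [hQ, hL0, hL]
    module
  have h2 : (wengerGraph F f).Adj (Sum.inl Q) (Sum.inr L) := by
    rw [adj_iff]
    intro k
    have hQ0 : Q 0 = u := by simp [hQ']
    rw [hQ0, hQ']
    simp
    ring
  exact h1.reachable.trans h2.reachable.symm

lemma reach_mem_SS (d : Fin (m + 1) → F) (hd : d ∈ SS f) (P : Fin (m + 1) → F) :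
    (wengerGraph F f).Reachable (Sum.inl P) (Sum.inl (P + d)) := by
  have key : ∀ x ∈ SS f, ∀ (a : F) (P : Fin (m + 1) → F),
      (wengerGraph F f).Reachable (Sum.inl P) (Sum.inl (P + a • x)) := by
    intro x hx
    induction hx using Submodule.span_induction with
    | mem x hx =>
      rcases hx with rfl | ⟨u, rfl⟩
      · -- x = e1
        intro a P
        refine reach_move' f P (P 0 + a) 0 _ ?_
        module
      · -- x = vv u - vv 0
        intro a P
        set P1 : Fin (m + 1) → F := P - P 0 • e1 F m with hP1
        set P2 : Fin (m + 1) → F := P1 + a • (vv f u - vv f 0) + u • e1 F m with hP2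
        have h10 : P1 0 = 0 := by simp [hP1]
        have h20 : P2 0 = u := by simp [hP2, h10]
        have r1 : (wengerGraph F f).Reachable (Sum.inl P) (Sum.inl P1) := by
          refine reach_move' f P 0 0 _ ?_
          rw [hP1]; module
        have r2 : (wengerGraph F f).Reachable (Sum.inl P1) (Sum.inl P2) := by
          refine reach_move' f P1 u a _ ?_
          rw [hP2, h10]; module
        have r3 : (wengerGraph F f).Reachable (Sum.inl P2)
            (Sum.inl (P + a • (vv f u - vv f 0))) := by
          refine reach_move' f P2 (P 0) 0 _ ?_
          rw [h20, hP2, hP1]; module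
        exact (r1.trans r2).trans r3
    | zero => intro a P; simpa using Reachable.refl _
    | add x y hx hy ihx ihy =>
      intro a P
      have := (ihx a P).trans (ihy a (P + a • x))
      rwa [smul_add, ← add_assoc]
    | smul b x hx ihx =>
      intro a P
      rw [smul_smul]
      exact ihx (a * b) P
  simpa using key d hd 1 P

/-- the component invariant -/
def inv : ((Fin (m + 1) → F) ⊕ (Fin (m + 1) → F)) → ((Fin (m + 1) → F) ⧸ SS f)
  | Sum.inl P => Submodule.Quotient.mk P
  | Sum.inr L => Submodule.Quotient.mk (L 0 • vv f 0 - L)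

lemma inv_eq_of_wadj {P L : Fin (m + 1) → F} (h : wengerAdj f P L) :
    inv f (Sum.inl P) = inv f (Sum.inr L) := by
  show (Submodule.Quotient.mk P : _ ⧸ SS f) = Submodule.Quotient.mk (L 0 • vv f 0 - L)
  rw [Submodule.Quotient.eq]
  have key : P + L = L 0 • vv f (P 0) + (P 0) • e1 F m := by
    funext j
    induction j using Fin.cases with
    | zero => simp; ring
    | succ k =>
      have := h k
      simp only [Pi.add_apply, Pi.smul_apply, vv_succ, e1_succ, smul_eq_mul,
        mul_zero, add_zero]
      linear_combination this
  have hkey2 : P - (L 0 • vv f 0 - L) =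
      L 0 • (vv f (P 0) - vv f 0) + (P 0) • e1 F m := by
    have h' : P - (L 0 • vv f 0 - L) = (P + L) - L 0 • vv f 0 := by abel
    rw [h', key]; module
  rw [hkey2]
  exact add_mem (Submodule.smul_mem _ _ (subset_span (Set.mem_insert_iff.mpr
      (Or.inr ⟨P 0, rfl⟩)))) (Submodule.smul_mem _ _ (subset_span (Set.mem_insert _ _)))

lemma inv_adj {v w : ((Fin (m + 1) → F) ⊕ (Fin (m + 1) → F))}
    (h : (wengerGraph F f).Adj v w) : inv f v = inv f w := by
  rw [wengerGraph, SimpleGraph.fromRel_adj] at h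
  obtain ⟨-, h | h⟩ := h
  · match v, w with
    | Sum.inl P, Sum.inr L => exact inv_eq_of_wadj f h
  · match v, w with
    | Sum.inr L, Sum.inl P => exact (inv_eq_of_wadj f h).symm

lemma inv_walk {v w : ((Fin (m + 1) → F) ⊕ (Fin (m + 1) → F))}
    (p : (wengerGraph F f).Walk v w) : inv f v = inv f w := by
  induction p with
  | nil => rfl
  | cons h _ ih => exact (inv_adj f h).trans ih

/-- every vertex is reachable from a point with the same invariant -/
lemma reach_point (v : ((Fin (m + 1) → F) ⊕ (Fin (m + 1) → F))) :
    ∃ P, (wengerGraph F f).Reachable v (Sum.inl P) ∧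
      inv f v = Submodule.Quotient.mk P := by
  match v with
  | Sum.inl P => exact ⟨P, Reachable.refl _, rfl⟩
  | Sum.inr L =>
    refine ⟨L 0 • vv f 0 - L, ?_, rfl⟩
    have hadj : (wengerGraph F f).Adj (Sum.inl (L 0 • vv f 0 - L)) (Sum.inr L) := by
      rw [adj_iff]
      intro k
      simp
      ring
    exact hadj.reachable.symm

noncomputable def phi : (wengerGraph F f).ConnectedComponent → ((Fin (m + 1) → F) ⧸ SS f) :=
  SimpleGraph.ConnectedComponent.lift (inv f) fun _ _ p _ => inv_walk f p

lemma phi_bijective : Function.Bijective (phi f) := by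
  constructor
  · intro C C'
    refine SimpleGraph.ConnectedComponent.ind₂ (fun v w h => ?_) C C'
    simp only [phi, SimpleGraph.ConnectedComponent.lift_mk] at h
    obtain ⟨P, rv, hv⟩ := reach_point f v
    obtain ⟨Q, rw', hw⟩ := reach_point f w
    rw [hv, hw, Submodule.Quotient.eq] at h
    have hr : (wengerGraph F f).Reachable (Sum.inl Q) (Sum.inl P) := by
      have := reach_mem_SS f (P - Q) h Q
      simpa using this
    exact SimpleGraph.ConnectedComponent.sound (rv.trans (hr.symm.trans rw'.symm))
  · intro y
    obtain ⟨P, rfl⟩ := Submodule.Quotient.mk_surjective _ y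
    exact ⟨(wengerGraph F f).connectedComponentMk (Sum.inl P), rfl⟩

end WengerAux

/-- The number of connected components of `G_q(f_2(x)y, …, f_{m+1}(x)y)` is
`q^{m+1-r}` where `r` is the `F_q`-rank of `1, f_2, …, f_{m+1}` as functions; in
particular the graph is connected iff `1, f_2, …, f_{m+1}` are `F_q`-linearly
independent. -/
theorem stmt6 (q m : ℕ) (hm : 1 ≤ m) (F : Type) [Field F] [Fintype F]
    (hq : Fintype.card F = q) (f : Fin m → Polynomial F)
    (g : Fin (m + 1) → (F → F))
    (hg : g = Fin.cases (fun _ => 1) fun k u => (f k).eval u) :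
    Nat.card (wengerGraph F f).ConnectedComponent =
      q ^ (m + 1 - Module.finrank F (Submodule.span F (Set.range g))) ∧
    ((wengerGraph F f).Connected ↔ LinearIndependent F g) := by
  classical
  open WengerAux Submodule Module in
  -- abbreviations
  set r := Module.finrank F (Submodule.span F (Set.range g)) with hr
  -- rank of SS equals r
  have hU0 : ∀ x ∈ Submodule.span F (Set.range fun u => vv f u - vv f 0),
      x 0 = 0 := by
    intro x hx
    have hle : Submodule.span F (Set.range fun u => vv f u - vv f 0) ≤
        LinearMap.ker (LinearMap.proj (R := F) (φ := fun _ : Fin (m+1) => F) 0) := by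
      rw [Submodule.span_le]
      rintro _ ⟨u, rfl⟩
      simp [LinearMap.mem_ker]
    simpa using hle hx
  set U := Submodule.span F (Set.range fun u => vv f u - vv f 0) with hUdef
  have hsup : ∀ a : Fin (m+1) → F, a 0 ≠ 0 →
      Module.finrank F ↥(U ⊔ Submodule.span F {a}) = Module.finrank F U + 1 := by
    intro a ha
    have hd : U ⊓ Submodule.span F {a} = ⊥ := by
      rw [eq_bot_iff]
      rintro x ⟨hxU, hxa⟩
      obtain ⟨c, rfl⟩ := Submodule.mem_span_singleton.mp hxa
      have h0 := hU0 _ hxU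
      have : c * a 0 = 0 := h0
      have hc : c = 0 := by
        rcases mul_eq_zero.mp this with h | h
        · exact h
        · exact absurd h ha
      simp [hc]
    have ha0 : a ≠ 0 := fun h => ha (by simp [h])
    have := Submodule.finrank_sup_add_finrank_inf_eq U (Submodule.span F {a})
    rw [hd, finrank_bot, finrank_span_singleton ha0] at this
    omega
  have hSSeq : SS f = U ⊔ Submodule.span F {e1 F m} := by
    rw [SS, Submodule.span_insert, sup_comm]
  have hW : Submodule.span F (Set.range (vv f)) = U ⊔ Submodule.span F {vv f 0} := by
    apply le_antisymm
    · rw [Submodule.span_le]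
      rintro _ ⟨u, rfl⟩
      have : vv f u = (vv f u - vv f 0) + vv f 0 := by abel
      rw [this]
      exact Submodule.add_mem _
        (Submodule.mem_sup_left (Submodule.subset_span ⟨u, rfl⟩))
        (Submodule.mem_sup_right (Submodule.subset_span rfl))
    · refine sup_le ?_ ?_
      · rw [Submodule.span_le]
        rintro _ ⟨u, rfl⟩
        exact Submodule.sub_mem _ (Submodule.subset_span ⟨u, rfl⟩)
          (Submodule.subset_span ⟨0, rfl⟩)
      · rw [Submodule.span_le, Set.singleton_subset_iff]
        exact Submodule.subset_span ⟨0, rfl⟩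
  -- transpose rank argument
  have hvg : vv f = fun u j => g j u := by
    funext u j
    induction j using Fin.cases with
    | zero => simp [hg, vv]
    | succ k => simp [hg, vv]
  have hWg : Module.finrank F ↥(Submodule.span F (Set.range (vv f))) = r := by
    set M : Matrix (Fin (m+1)) F F := Matrix.of g with hM
    have h1 : Set.range (vv f) = Set.range M.col := by
      rw [hvg]
      rfl
    have h2 : Set.range g = Set.range M.row := rfl
    rw [h1, ← Matrix.rank_eq_finrank_span_cols, hr, h2,
      ← Matrix.rank_eq_finrank_span_row]
  have hSSrank : Module.finrank F ↥(SS f) = r := by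
    rw [hSSeq, hsup _ (by simp : (e1 F m) 0 ≠ 0)]
    rw [hW, hsup _ (by simp : (vv f 0) 0 ≠ 0)] at hWg
    omega
  -- card of components
  have hequiv : Nat.card (wengerGraph F f).ConnectedComponent =
      Nat.card ((Fin (m+1) → F) ⧸ SS f) :=
    Nat.card_congr (Equiv.ofBijective _ (phi_bijective f))
  have hrle : r ≤ m + 1 := by
    rw [hr]
    simpa [Set.finrank, Fintype.card_fin] using finrank_range_le_card g
  have hcard : Nat.card (wengerGraph F f).ConnectedComponent = q ^ (m + 1 - r) := by
    rw [hequiv]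
    haveI : Fintype ((Fin (m+1) → F) ⧸ SS f) := Fintype.ofFinite _
    rw [Nat.card_eq_fintype_card, card_eq_pow_finrank (K := F), hq]
    congr 1
    have h1 := Submodule.finrank_quotient_add_finrank (SS f)
    rw [hSSrank] at h1
    have h2 : Module.finrank F (Fin (m+1) → F) = m + 1 := Module.finrank_fin_fun F
    omega
  refine ⟨hcard, ?_⟩
  -- connectivity
  have hq2 : 2 ≤ q := by
    rw [← hq]; exact Fintype.one_lt_card
  have hconn : (wengerGraph F f).Connected ↔
      Nat.card (wengerGraph F f).ConnectedComponent = 1 := by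
    constructor
    · intro h
      rw [Nat.card_eq_one_iff_unique]
      refine ⟨⟨fun C C' => ?_⟩, ⟨(wengerGraph F f).connectedComponentMk
        (Sum.inl 0)⟩⟩
      refine SimpleGraph.ConnectedComponent.ind₂ (fun v w => ?_) C C'
      exact SimpleGraph.ConnectedComponent.sound (h.preconnected v w)
    · intro h
      have hs := (Nat.card_eq_one_iff_unique.mp h).1
      haveI : Nonempty ((Fin (m + 1) → F) ⊕ (Fin (m + 1) → F)) := ⟨Sum.inl 0⟩
      refine ⟨fun v w => ?_⟩
      exact SimpleGraph.ConnectedComponent.exact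
        (Subsingleton.elim _ _)
  rw [hconn, hcard]
  have hli : LinearIndependent F g ↔ m + 1 = r := by
    rw [linearIndependent_iff_card_eq_finrank_span, Fintype.card_fin]
    rfl
  constructor
  · intro h
    rw [hli]
    by_contra hne
    have hpos : m + 1 - r ≠ 0 := by omega
    have := (pow_eq_one_iff_left hpos).mp h
    omega
  · intro h
    rw [hli] at h
    have : m + 1 - r = 0 := by omega
    rw [this, pow_zero]
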